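/- Let n ≥ 1 and z ∈ ℝⁿ. Then there exists a threshold a ∈ ℝ with Σᵢ max(0, zᵢ − a) = 1, and the vector x with components xᵢ = max(0, zᵢ − a) is the unique minimizer of ‖x − z‖ over the unit simplex {x ∈ ℝⁿ : xᵢ ≥ 0 for all i, Σᵢ xᵢ = 1}; i.e. x is the Euclidean projection of z onto the unit simplex. -/

import Mathlib

open scoped RealInnerProductSpace


/-- Soft-thresholding characterization of the Euclidean projection onto the unit simplex:
there is a threshold `a` with `Σᵢ max(0, zᵢ − a) = 1`, and `xᵢ = max(0, zᵢ − a)` is the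
unique closest point of the simplex to `z`. -/
theorem stmt_16 {n : ℕ} (hn : 1 ≤ n) (z : EuclideanSpace ℝ (Fin n)) :
    ∃ a : ℝ, (∑ i, max 0 (z i - a)) = 1 ∧
      ∀ y : EuclideanSpace ℝ (Fin n), (∀ i, 0 ≤ y i) → (∑ i, y i) = 1 →
        y ≠ (show EuclideanSpace ℝ (Fin n) from WithLp.toLp 2 fun i => max 0 (z i - a)) →
        ‖(show EuclideanSpace ℝ (Fin n) from WithLp.toLp 2 fun i => max 0 (z i - a)) - z‖ < ‖y - z‖ := by
  have hne : (Finset.univ : Finset (Fin n)).Nonempty := by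
    refine ⟨⟨0, hn⟩, Finset.mem_univ _⟩
  set f : ℝ → ℝ := fun a => ∑ i, max 0 (z i - a) with hf
  have hcont : Continuous f := by
    apply continuous_finset_sum
    intro i _
    exact continuous_const.max (continuous_const.sub continuous_id)
  set M : ℝ := Finset.univ.sup' hne (fun i => z i) with hM
  set m : ℝ := Finset.univ.inf' hne (fun i => z i) with hm
  have hfM : f M = 0 := by
    apply Finset.sum_eq_zero
    intro i _
    have : z i ≤ M := Finset.le_sup' _ (Finset.mem_univ i)
    simp [max_eq_left, sub_nonpos.mpr this]
  have hfm : (1 : ℝ) ≤ f (m - 1) := by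
    have h1 : ∀ i ∈ Finset.univ, (1 : ℝ) ≤ max 0 (z i - (m - 1)) := by
      intro i _
      have : m ≤ z i := Finset.inf'_le _ (Finset.mem_univ i)
      have : (1 : ℝ) ≤ z i - (m - 1) := by linarith
      exact le_trans this (le_max_right _ _)
    calc (1 : ℝ) ≤ ∑ _i : Fin n, (1 : ℝ) / n := by
          rw [Finset.sum_const]
          have hn' : (0 : ℝ) < n := by positivity
          rw [Finset.card_univ, Fintype.card_fin]
          rw [nsmul_eq_mul, mul_one_div_cancel hn'.ne']
      _ ≤ f (m - 1) := by
          apply Finset.sum_le_sum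
          intro i hi
          have hn' : (1 : ℝ) ≤ n := by exact_mod_cast hn
          have : (1 : ℝ) / n ≤ 1 := by
            rw [div_le_one (by linarith)]; exact hn'
          exact le_trans this (h1 i hi)
  have hmm : m - 1 ≤ M := by
    have h1 : m ≤ z ⟨0, hn⟩ := Finset.inf'_le _ (Finset.mem_univ _)
    have h2 : z ⟨0, hn⟩ ≤ M := Finset.le_sup' _ (Finset.mem_univ _)
    linarith
  have hivt : (1 : ℝ) ∈ f '' Set.uIcc (m - 1) M := by
    apply intermediate_value_uIcc hcont.continuousOn
    rw [Set.mem_uIcc]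
    right
    exact ⟨by rw [hfM]; norm_num, hfm⟩
  obtain ⟨a, -, ha⟩ := hivt
  refine ⟨a, ha, ?_⟩
  intro y hy hsum hyx
  set x : EuclideanSpace ℝ (Fin n) := WithLp.toLp 2 fun i => max 0 (z i - a) with hx
  -- key variational inequality
  have hkey : (0 : ℝ) ≤ (inner ℝ (y - x) (x - z) : ℝ) := by
    have hinner : (inner ℝ (y - x) (x - z) : ℝ) = ∑ i, (y i - x i) * (x i - z i) := by
      simp [PiLp.inner_apply, RCLike.inner_apply, mul_comm]
    rw [hinner]
    have hterm2 : ∀ i ∈ Finset.univ, (y i - x i) * (z i - x i) ≤ (y i - x i) * a := by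
      intro i _
      have hxi : x i = max 0 (z i - a) := rfl
      rcases le_total (z i) a with h | h
      · have : x i = 0 := by rw [hxi]; exact max_eq_left (by linarith)
        rw [this]
        have := hy i
        nlinarith
      · have : x i = z i - a := by rw [hxi]; exact max_eq_right (by linarith)
        rw [this]
        nlinarith [hy i]
    have hsum2 : ∑ i, (y i - x i) * (z i - x i) ≤ ∑ i, (y i - x i) * a :=
      Finset.sum_le_sum hterm2
    have hxa : ∑ i, x i = 1 := ha
    have hra : ∑ i, (y i - x i) * a = 0 := by
      rw [← Finset.sum_mul]
      have : ∑ i, (y i - x i) = 0 := by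
        rw [Finset.sum_sub_distrib, hsum, hxa]; ring
      rw [this]; ring
    have : ∑ i, (y i - x i) * (z i - x i) ≤ 0 := by rw [← hra]; exact hsum2
    have heq : ∑ i, (y i - x i) * (x i - z i) = -∑ i, (y i - x i) * (z i - x i) := by
      rw [← Finset.sum_neg_distrib]
      apply Finset.sum_congr rfl
      intro i _; ring
    rw [heq]
    linarith
  -- expand the squared norm
  have hdecomp : ‖y - z‖^2 = ‖y - x‖^2 + 2 * (inner ℝ (y - x) (x - z) : ℝ) + ‖x - z‖^2 := by
    have : y - z = (y - x) + (x - z) := by abel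
    rw [this, norm_add_sq_real]
  have hyx' : (0 : ℝ) < ‖y - x‖ := by
    rw [norm_pos_iff]
    intro h
    exact hyx (by rwa [sub_eq_zero] at h)
  have hsq : ‖x - z‖^2 < ‖y - z‖^2 := by
    rw [hdecomp]
    nlinarith
  nlinarith [norm_nonneg (x - z), norm_nonneg (y - z)]
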